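/- For n ≥ m+3, the map P from the reduced configuration space M_{m,n} to (ℂ \ {0,1})^{m(n-m-2)} whose components are the determinant cross ratios p_{s,t}(q) = e_{𝐦(ŝ);s,m+1,m+2,t}(q), s = 1,...,m, t = m+3,...,n, is injective. -/

import Mathlib

/-- The projective determinant `d_{a_1,...,a_{m+1}}(q)` in homogeneous coordinates. -/
noncomputable def dP {n m : ℕ} (q : Fin n → Fin (m + 1) → ℂ) (a : Fin (m + 1) → Fin n) : ℂ :=
  (Matrix.of (fun r c : Fin (m + 1) => q (a r) c)).det

/-- Geometric genericity for points of `ℂℙ^m` in homogeneous coordinates. -/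
def GenPosP {n m : ℕ} (q : Fin n → Fin (m + 1) → ℂ) : Prop :=
  ∀ a : Fin (m + 1) → Fin n, Function.Injective a → dP q a ≠ 0

/-- The determinant cross ratio `e_{𝐢;j,k,l,s}` on `ℰⁿ(ℂℙ^m, gp)` in homogeneous
coordinates (the paper's `m` is `M + 1`, so `𝐢` has `M` entries). -/
noncomputable def ecrP {n M : ℕ} (q : Fin n → Fin (M + 2) → ℂ) (i : Fin M → Fin n)
    (j k l s : Fin n) : ℂ :=
  (dP q (Fin.snoc (Fin.snoc i j) k) * dP q (Fin.snoc (Fin.snoc i l) s)) /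
  (dP q (Fin.snoc (Fin.snoc i j) l) * dP q (Fin.snoc (Fin.snoc i k) s))

/-- `q` lies in the reduced configuration space `M_{m,n}` (the paper's `m` is
`M + 1`, 0-indexed): `q_i` is the `i`-th standard coordinate point for
`i = 1,...,m+1` and `q_{m+2} = [1:⋯:1]`, the representatives being normalized. -/
def InRedSpace {n M : ℕ} (hn : M + 4 ≤ n) (q : Fin n → Fin (M + 2) → ℂ) : Prop :=
  (∀ i : Fin (M + 2), q (Fin.castLE (by omega) i) = (Pi.single i 1 : Fin (M + 2) → ℂ)) ∧
  q ⟨M + 2, by omega⟩ = fun _ => (1 : ℂ)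

open Fin Matrix

lemma det_expand_row {N : ℕ} (R : Fin N → Fin N → ℂ) (i : Fin N) :
    (Matrix.of R).det = ∑ c, R i c * (Matrix.of (Function.update R i (Pi.single c 1))).det := by
  classical
  set L : (Fin N → ℂ) →ₗ[ℂ] ℂ :=
    (Matrix.detRowAlternating : (Fin N → ℂ) [⋀^Fin N]→ₗ[ℂ] ℂ).toMultilinearMap.toLinearMap R i
    with hL
  have hval : ∀ x, L x = (Matrix.of (Function.update R i x)).det := fun x => rfl
  have h1 : (Matrix.of R).det = L (R i) := by
    rw [hval, Function.update_eq_self]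
  rw [h1]
  have hRi : R i = ∑ c, R i c • (Pi.single c (1:ℂ) : Fin N → ℂ) := by
    funext x
    simp [Pi.single_apply, Finset.sum_ite_eq']
  conv_lhs => rw [hRi]
  rw [map_sum]
  refine Finset.sum_congr rfl fun c _ => ?_
  rw [L.map_smul, hval, smul_eq_mul]

/-- The coordinate-point rows `e_{𝐦(ŝ)}`. -/
noncomputable def EE (M : ℕ) (s : Fin (M + 1)) : Fin M → Fin (M + 2) → ℂ :=
  fun r => Pi.single ((s.succAbove r).castSucc) 1

/-- The sign `ε` (a fixed determinant of a permutation matrix). -/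
noncomputable def eps (M : ℕ) (s : Fin (M + 1)) : ℂ :=
  (Matrix.of (Fin.snoc (Fin.snoc (EE M s) (Pi.single s.castSucc 1))
      (Pi.single (Fin.last (M + 1)) 1))).det

variable {M : ℕ}

lemma update_snoc_mid {α : Type*} (E : Fin M → α) (u v x : α) :
    Function.update (Fin.snoc (Fin.snoc E u : Fin (M + 1) → α) v : Fin (M + 2) → α)
        (Fin.castSucc (Fin.last M)) x
      = Fin.snoc (Fin.snoc E x) v := by
  rw [← Fin.snoc_update, Fin.update_snoc_last]

lemma castSucc_castSucc_ne_mid (r : Fin M) :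
    (Fin.castSucc (Fin.castSucc r)) ≠ Fin.castSucc (Fin.last M) := by
  simp only [ne_eq, Fin.ext_iff, Fin.coe_castSucc, Fin.val_last]
  omega

lemma castSucc_castSucc_ne_last (r : Fin M) :
    (Fin.castSucc (Fin.castSucc r)) ≠ Fin.last (M + 1) := by
  simp only [ne_eq, Fin.ext_iff, Fin.coe_castSucc, Fin.val_last]
  omega

lemma mid_ne_last : (Fin.castSucc (Fin.last M)) ≠ Fin.last (M + 1) := by
  simp only [ne_eq, Fin.ext_iff, Fin.coe_castSucc, Fin.val_last]
  omega

lemma sc_ne_top (s : Fin (M + 1)) : s.castSucc ≠ Fin.last (M + 1) := by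
  simp only [ne_eq, Fin.ext_iff, Fin.coe_castSucc, Fin.val_last]
  omega

lemma EE_ne_sc (s : Fin (M + 1)) (r : Fin M) : (s.succAbove r).castSucc ≠ s.castSucc :=
  fun h => Fin.succAbove_ne s r (Fin.castSucc_injective _ h)

lemma EE_ne_top (s : Fin (M + 1)) (r : Fin M) : (s.succAbove r).castSucc ≠ Fin.last (M + 1) :=
  sc_ne_top _

/-- Vanishing when the middle row duplicates a coordinate row. -/
lemma det_vanish_mid (s : Fin (M + 1)) (v : Fin (M + 2) → ℂ) (r : Fin M) :
    (Matrix.of (Fin.snoc (Fin.snoc (EE M s) (Pi.single ((s.succAbove r).castSucc) (1 : ℂ))) v)).det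
      = 0 := by
  apply Matrix.det_zero_of_row_eq (castSucc_castSucc_ne_mid r)
  show (Fin.snoc (Fin.snoc (EE M s) (Pi.single ((s.succAbove r).castSucc) (1 : ℂ))) v :
      Fin (M + 2) → Fin (M + 2) → ℂ) (Fin.castSucc (Fin.castSucc r))
    = (Fin.snoc (Fin.snoc (EE M s) (Pi.single ((s.succAbove r).castSucc) (1 : ℂ))) v :
      Fin (M + 2) → Fin (M + 2) → ℂ) (Fin.castSucc (Fin.last M))
  rw [Fin.snoc_castSucc, Fin.snoc_castSucc, Fin.snoc_castSucc, Fin.snoc_last]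
  rfl

/-- Vanishing when the last row duplicates a coordinate row. -/
lemma det_vanish_last (s : Fin (M + 1)) (u : Fin (M + 2) → ℂ) (r : Fin M) :
    (Matrix.of (Fin.snoc (Fin.snoc (EE M s) u) (Pi.single ((s.succAbove r).castSucc) (1 : ℂ)))).det
      = 0 := by
  apply Matrix.det_zero_of_row_eq (castSucc_castSucc_ne_last r)
  show (Fin.snoc (Fin.snoc (EE M s) u) (Pi.single ((s.succAbove r).castSucc) (1 : ℂ)) :
      Fin (M + 2) → Fin (M + 2) → ℂ) (Fin.castSucc (Fin.castSucc r))
    = (Fin.snoc (Fin.snoc (EE M s) u) (Pi.single ((s.succAbove r).castSucc) (1 : ℂ)) :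
      Fin (M + 2) → Fin (M + 2) → ℂ) (Fin.last (M + 1))
  rw [Fin.snoc_castSucc, Fin.snoc_castSucc, Fin.snoc_last]
  rfl

lemma Dlin (s : Fin (M + 1)) (u v : Fin (M + 2) → ℂ) :
    (Matrix.of (Fin.snoc (Fin.snoc (EE M s) u) v)).det
      = u s.castSucc *
          (Matrix.of (Fin.snoc (Fin.snoc (EE M s) (Pi.single s.castSucc 1)) v)).det
        + u (Fin.last (M + 1)) *
          (Matrix.of (Fin.snoc (Fin.snoc (EE M s) (Pi.single (Fin.last (M + 1)) 1)) v)).det := by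
  rw [det_expand_row (Fin.snoc (Fin.snoc (EE M s) u) v) (Fin.castSucc (Fin.last M))]
  have hrow : ∀ c : Fin (M + 2),
      Function.update (Fin.snoc (Fin.snoc (EE M s) u) v) (Fin.castSucc (Fin.last M))
          (Pi.single c (1 : ℂ))
        = (Fin.snoc (Fin.snoc (EE M s) (Pi.single c 1) : Fin (M + 1) → Fin (M + 2) → ℂ) v :
            Fin (M + 2) → Fin (M + 2) → ℂ) := fun c =>
    update_snoc_mid (EE M s) u v (Pi.single c 1)
  have hu : (Fin.snoc (Fin.snoc (EE M s) u) v : Fin (M + 2) → Fin (M + 2) → ℂ)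
      (Fin.castSucc (Fin.last M)) = u := by
    rw [Fin.snoc_castSucc, Fin.snoc_last]
  have hz : ∀ c ∈ (Finset.univ : Finset (Fin (M + 2))),
      c ∉ ({s.castSucc, Fin.last (M + 1)} : Finset (Fin (M + 2))) →
      (Fin.snoc (Fin.snoc (EE M s) u) v : Fin (M + 2) → Fin (M + 2) → ℂ)
          (Fin.castSucc (Fin.last M)) c *
        (Matrix.of (Function.update (Fin.snoc (Fin.snoc (EE M s) u) v)
          (Fin.castSucc (Fin.last M)) (Pi.single c 1))).det = 0 := by
    intro c _ hc
    simp only [Finset.mem_insert, Finset.mem_singleton, not_or] at hc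
    obtain ⟨c0, rfl⟩ := Fin.exists_castSucc_eq.mpr hc.2
    have hc0 : c0 ≠ s := fun h => hc.1 (by rw [h])
    obtain ⟨r, hr⟩ := Fin.exists_succAbove_eq hc0
    rw [hrow, ← hr, det_vanish_mid, mul_zero]
  rw [← Finset.sum_subset (Finset.subset_univ {s.castSucc, Fin.last (M + 1)}) hz,
    Finset.sum_pair (sc_ne_top s), hrow, hrow, hu]

lemma Dlin2 (s : Fin (M + 1)) (u v : Fin (M + 2) → ℂ) :
    (Matrix.of (Fin.snoc (Fin.snoc (EE M s) u) v)).det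
      = v s.castSucc *
          (Matrix.of (Fin.snoc (Fin.snoc (EE M s) u) (Pi.single s.castSucc 1))).det
        + v (Fin.last (M + 1)) *
          (Matrix.of (Fin.snoc (Fin.snoc (EE M s) u) (Pi.single (Fin.last (M + 1)) 1))).det := by
  rw [det_expand_row (Fin.snoc (Fin.snoc (EE M s) u) v) (Fin.last (M + 1))]
  have hrow : ∀ c : Fin (M + 2),
      Function.update (Fin.snoc (Fin.snoc (EE M s) u) v) (Fin.last (M + 1))
          (Pi.single c (1 : ℂ))
        = (Fin.snoc (Fin.snoc (EE M s) u : Fin (M + 1) → Fin (M + 2) → ℂ) (Pi.single c 1) :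
            Fin (M + 2) → Fin (M + 2) → ℂ) := fun c => by
    rw [Fin.update_snoc_last]
  have hv : (Fin.snoc (Fin.snoc (EE M s) u) v : Fin (M + 2) → Fin (M + 2) → ℂ)
      (Fin.last (M + 1)) = v := Fin.snoc_last _ _
  have hz : ∀ c ∈ (Finset.univ : Finset (Fin (M + 2))),
      c ∉ ({s.castSucc, Fin.last (M + 1)} : Finset (Fin (M + 2))) →
      (Fin.snoc (Fin.snoc (EE M s) u) v : Fin (M + 2) → Fin (M + 2) → ℂ)
          (Fin.last (M + 1)) c *
        (Matrix.of (Function.update (Fin.snoc (Fin.snoc (EE M s) u) v)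
          (Fin.last (M + 1)) (Pi.single c 1))).det = 0 := by
    intro c _ hc
    simp only [Finset.mem_insert, Finset.mem_singleton, not_or] at hc
    obtain ⟨c0, rfl⟩ := Fin.exists_castSucc_eq.mpr hc.2
    have hc0 : c0 ≠ s := fun h => hc.1 (by rw [h])
    obtain ⟨r, hr⟩ := Fin.exists_succAbove_eq hc0
    rw [hrow, ← hr, det_vanish_last, mul_zero]
  rw [← Finset.sum_subset (Finset.subset_univ {s.castSucc, Fin.last (M + 1)}) hz,
    Finset.sum_pair (sc_ne_top s), hrow, hrow, hv]

lemma det_snoc_snoc (s : Fin (M + 1)) (u v : Fin (M + 2) → ℂ) :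
    (Matrix.of (Fin.snoc (Fin.snoc (EE M s) u) v)).det
      = (u s.castSucc * v (Fin.last (M + 1)) - u (Fin.last (M + 1)) * v s.castSucc)
        * eps M s := by
  rw [Dlin, Dlin2 s (Pi.single s.castSucc 1), Dlin2 s (Pi.single (Fin.last (M + 1)) 1)]
  have h1 : (Matrix.of (Fin.snoc (Fin.snoc (EE M s) (Pi.single s.castSucc (1 : ℂ)))
      (Pi.single s.castSucc 1))).det = 0 := by
    apply Matrix.det_zero_of_row_eq mid_ne_last
    show (Fin.snoc (Fin.snoc (EE M s) (Pi.single s.castSucc (1 : ℂ))) (Pi.single s.castSucc 1) :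
        Fin (M + 2) → Fin (M + 2) → ℂ) (Fin.castSucc (Fin.last M))
      = (Fin.snoc (Fin.snoc (EE M s) (Pi.single s.castSucc (1 : ℂ))) (Pi.single s.castSucc 1) :
        Fin (M + 2) → Fin (M + 2) → ℂ) (Fin.last (M + 1))
    rw [Fin.snoc_castSucc, Fin.snoc_last, Fin.snoc_last]
  have h2 : (Matrix.of (Fin.snoc (Fin.snoc (EE M s) (Pi.single (Fin.last (M + 1)) (1 : ℂ)))
      (Pi.single (Fin.last (M + 1)) 1))).det = 0 := by
    apply Matrix.det_zero_of_row_eq mid_ne_last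
    show (Fin.snoc (Fin.snoc (EE M s) (Pi.single (Fin.last (M + 1)) (1 : ℂ)))
        (Pi.single (Fin.last (M + 1)) 1) :
        Fin (M + 2) → Fin (M + 2) → ℂ) (Fin.castSucc (Fin.last M))
      = (Fin.snoc (Fin.snoc (EE M s) (Pi.single (Fin.last (M + 1)) (1 : ℂ)))
        (Pi.single (Fin.last (M + 1)) 1) :
        Fin (M + 2) → Fin (M + 2) → ℂ) (Fin.last (M + 1))
    rw [Fin.snoc_castSucc, Fin.snoc_last, Fin.snoc_last]
  have h3 : (Matrix.of (Fin.snoc (Fin.snoc (EE M s) (Pi.single (Fin.last (M + 1)) (1 : ℂ)))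
      (Pi.single s.castSucc 1))).det = - eps M s := by
    have hsub : (Matrix.of (Fin.snoc (Fin.snoc (EE M s) (Pi.single s.castSucc (1 : ℂ)))
          (Pi.single (Fin.last (M + 1)) 1))).submatrix
          (Equiv.swap (Fin.castSucc (Fin.last M)) (Fin.last (M + 1))) id
        = Matrix.of (Fin.snoc (Fin.snoc (EE M s) (Pi.single (Fin.last (M + 1)) (1 : ℂ)))
          (Pi.single s.castSucc 1)) := by
      ext k c
      simp only [Matrix.submatrix_apply, id_eq, Matrix.of_apply]
      induction k using Fin.lastCases with
      | last =>
        rw [Equiv.swap_apply_right, Fin.snoc_castSucc, Fin.snoc_last, Fin.snoc_last]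
      | cast j =>
        induction j using Fin.lastCases with
        | last =>
          rw [Equiv.swap_apply_left, Fin.snoc_last, Fin.snoc_castSucc, Fin.snoc_last]
        | cast r =>
          rw [Equiv.swap_apply_of_ne_of_ne (castSucc_castSucc_ne_mid r)
              (castSucc_castSucc_ne_last r),
            Fin.snoc_castSucc, Fin.snoc_castSucc, Fin.snoc_castSucc, Fin.snoc_castSucc]
    have hperm := Matrix.det_permute
      (Equiv.swap (Fin.castSucc (Fin.last M)) (Fin.last (M + 1)))
      (Matrix.of (Fin.snoc (Fin.snoc (EE M s) (Pi.single s.castSucc (1 : ℂ)))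
        (Pi.single (Fin.last (M + 1)) 1)))
    rw [hsub, Equiv.Perm.sign_swap mid_ne_last] at hperm
    rw [hperm]
    simp only [eps, Units.val_neg, Units.val_one, Int.reduceNeg, Int.cast_neg, Int.cast_one,
      neg_mul, one_mul]
  have h4 : (Matrix.of (Fin.snoc (Fin.snoc (EE M s) (Pi.single s.castSucc (1 : ℂ)))
      (Pi.single (Fin.last (M + 1)) 1))).det = eps M s := rfl
  rw [h1, h2, h3, h4]
  ring


lemma castSucc_ne_last_gen (c : Fin (M + 1)) : c.castSucc ≠ Fin.last (M + 1) := by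
  simp only [ne_eq, Fin.ext_iff, Fin.coe_castSucc, Fin.val_last]
  omega

section Eval

variable {n : ℕ}

lemma snoc_inj {k : ℕ} {g : Fin k → Fin n} {x : Fin n} (hg : Function.Injective g)
    (hx : ∀ r, g r ≠ x) : Function.Injective (Fin.snoc g x) := by
  intro a b h
  induction a using Fin.lastCases with
  | last =>
    induction b using Fin.lastCases with
    | last => rfl
    | cast b' =>
      rw [Fin.snoc_last, Fin.snoc_castSucc] at h
      exact absurd h.symm (hx b')
  | cast a' =>
    induction b using Fin.lastCases with
    | last =>
      rw [Fin.snoc_last, Fin.snoc_castSucc] at h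
      exact absurd h (hx a')
    | cast b' =>
      rw [Fin.snoc_castSucc, Fin.snoc_castSucc] at h
      exact congrArg Fin.castSucc (hg h)

/-- Evaluation of the determinants `d` on the reduced space. -/
lemma dP_eval (hn : M + 4 ≤ n) (q : Fin n → Fin (M + 2) → ℂ) (hmem : InRedSpace hn q)
    (s : Fin (M + 1)) {h : M + 1 ≤ n} (j k : Fin n) :
    dP q (Fin.snoc (Fin.snoc (fun r : Fin M => Fin.castLE h (s.succAbove r)) j) k)
      = (q j s.castSucc * q k (Fin.last (M + 1))
          - q j (Fin.last (M + 1)) * q k s.castSucc) * eps M s := by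
  have hrows : (fun r => q ((Fin.snoc (Fin.snoc (fun r : Fin M => Fin.castLE h (s.succAbove r)) j) k :
          Fin (M + 2) → Fin n) r))
      = (Fin.snoc (Fin.snoc (EE M s) (q j) : Fin (M + 1) → Fin (M + 2) → ℂ) (q k) :
          Fin (M + 2) → Fin (M + 2) → ℂ) := by
    have h0 : (fun r => q ((Fin.snoc (Fin.snoc (fun r : Fin M => Fin.castLE h (s.succAbove r)) j) k :
            Fin (M + 2) → Fin n) r))
        = q ∘ (Fin.snoc (Fin.snoc (fun r : Fin M => Fin.castLE h (s.succAbove r)) j) k) := rfl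
    have hEE : (q ∘ fun r : Fin M => Fin.castLE h (s.succAbove r)) = EE M s := by
      funext r
      have h1 : Fin.castLE h (s.succAbove r)
          = Fin.castLE (show M + 2 ≤ n by omega) ((s.succAbove r).castSucc) := by
        ext; simp
      show q (Fin.castLE h (s.succAbove r)) = _
      rw [h1, hmem.1]
      rfl
    rw [h0, Fin.comp_snoc, Fin.comp_snoc, hEE]
  show (Matrix.of (fun r => q ((Fin.snoc (Fin.snoc (fun r : Fin M => Fin.castLE h (s.succAbove r)) j) k :
        Fin (M + 2) → Fin n) r))).det = _
  rw [hrows, det_snoc_snoc]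

/-- The determinant giving the last coordinate of `q t`. -/
lemma dP_last (hn : M + 4 ≤ n) (q : Fin n → Fin (M + 2) → ℂ) (hmem : InRedSpace hn q)
    (t : Fin n) :
    dP q (Fin.snoc (fun i : Fin (M + 1) => Fin.castLE (show M + 2 ≤ n by omega) i.castSucc) t)
      = q t (Fin.last (M + 1)) := by
  have hrows : (fun r => q ((Fin.snoc (fun i : Fin (M + 1) => Fin.castLE (show M + 2 ≤ n by omega) i.castSucc) t :
          Fin (M + 2) → Fin n) r))
      = (Fin.snoc (fun i : Fin (M + 1) => (Pi.single i.castSucc 1 : Fin (M + 2) → ℂ)) (q t) :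
          Fin (M + 2) → Fin (M + 2) → ℂ) := by
    have h0 : (fun r => q ((Fin.snoc (fun i : Fin (M + 1) => Fin.castLE (show M + 2 ≤ n by omega) i.castSucc) t :
            Fin (M + 2) → Fin n) r))
        = q ∘ (Fin.snoc (fun i : Fin (M + 1) => Fin.castLE (show M + 2 ≤ n by omega) i.castSucc) t) :=
      rfl
    have hG : (q ∘ fun i : Fin (M + 1) => Fin.castLE (show M + 2 ≤ n by omega) i.castSucc)
        = fun i : Fin (M + 1) => (Pi.single i.castSucc 1 : Fin (M + 2) → ℂ) := by
      funext i
      show q (Fin.castLE (show M + 2 ≤ n by omega) i.castSucc) = _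
      rw [hmem.1]
    rw [h0, Fin.comp_snoc, hG]
  show (Matrix.of (fun r => q ((Fin.snoc (fun i : Fin (M + 1) => Fin.castLE (show M + 2 ≤ n by omega) i.castSucc) t :
        Fin (M + 2) → Fin n) r))).det = _
  rw [hrows]
  rw [det_expand_row _ (Fin.last (M + 1))]
  have hrow : ∀ c : Fin (M + 2),
      Function.update (Fin.snoc (fun i : Fin (M + 1) =>
          (Pi.single i.castSucc 1 : Fin (M + 2) → ℂ)) (q t)) (Fin.last (M + 1))
          (Pi.single c (1 : ℂ))
        = (Fin.snoc (fun i : Fin (M + 1) => (Pi.single i.castSucc 1 : Fin (M + 2) → ℂ))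
            (Pi.single c 1) : Fin (M + 2) → Fin (M + 2) → ℂ) := fun c => by
    rw [Fin.update_snoc_last]
  have hv : (Fin.snoc (fun i : Fin (M + 1) => (Pi.single i.castSucc 1 : Fin (M + 2) → ℂ)) (q t) :
      Fin (M + 2) → Fin (M + 2) → ℂ) (Fin.last (M + 1)) = q t := Fin.snoc_last _ _
  rw [Finset.sum_eq_single (Fin.last (M + 1))]
  · rw [hv, hrow]
    have hid : (Matrix.of (Fin.snoc (fun i : Fin (M + 1) =>
        (Pi.single i.castSucc 1 : Fin (M + 2) → ℂ)) (Pi.single (Fin.last (M + 1)) 1) :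
        Fin (M + 2) → Fin (M + 2) → ℂ)) = (1 : Matrix (Fin (M + 2)) (Fin (M + 2)) ℂ) := by
      ext a b
      induction a using Fin.lastCases with
      | last => simp [Fin.snoc_last, Pi.single_apply, Matrix.one_apply, eq_comm]
      | cast a' => simp [Fin.snoc_castSucc, Pi.single_apply, Matrix.one_apply, eq_comm]
    rw [hid, Matrix.det_one, mul_one]
  · intro c _ hc
    obtain ⟨c0, rfl⟩ := Fin.exists_castSucc_eq.mpr hc
    rw [hrow]
    have : (Matrix.of (Fin.snoc (fun i : Fin (M + 1) =>
        (Pi.single i.castSucc 1 : Fin (M + 2) → ℂ)) (Pi.single c0.castSucc 1) :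
        Fin (M + 2) → Fin (M + 2) → ℂ)).det = 0 := by
      apply Matrix.det_zero_of_row_eq (castSucc_ne_last_gen c0)
      show (Fin.snoc (fun i : Fin (M + 1) => (Pi.single i.castSucc 1 : Fin (M + 2) → ℂ))
          (Pi.single c0.castSucc 1) : Fin (M + 2) → Fin (M + 2) → ℂ) c0.castSucc
        = (Fin.snoc (fun i : Fin (M + 1) => (Pi.single i.castSucc 1 : Fin (M + 2) → ℂ))
          (Pi.single c0.castSucc 1) : Fin (M + 2) → Fin (M + 2) → ℂ) (Fin.last (M + 1))
      rw [Fin.snoc_castSucc, Fin.snoc_last]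
    rw [this, mul_zero]
  · intro hmem'
    exact absurd (Finset.mem_univ _) hmem'

end Eval

lemma snoc_snoc_inj {k n : ℕ} {g : Fin k → Fin n} {x y : Fin n} (hg : Function.Injective g)
    (hgx : ∀ r, g r ≠ x) (hgy : ∀ r, g r ≠ y) (hxy : x ≠ y) :
    Function.Injective (Fin.snoc (Fin.snoc g x) y) := by
  apply snoc_inj (snoc_inj hg hgx)
  intro r
  induction r using Fin.lastCases with
  | last => rw [Fin.snoc_last]; exact hxy
  | cast r' => rw [Fin.snoc_castSucc]; exact hgy r'

/-- The map `P : M_{m,n} → (ℂ∖{0,1})^{m(n-m-2)}` with components the determinant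
cross ratios `p_{s,t}(q) = e_{𝐦(ŝ);s,m+1,m+2,t}(q)`, `s = 1,...,m`,
`t = m+3,...,n`, is injective (the paper's `m` is `M + 1`; all indices 0-indexed,
`𝐦(ŝ)` given by `s.succAbove`, and injectivity is projective equality of the
configurations). -/
theorem reduced_space_embedding_injective {n M : ℕ} (hn : M + 4 ≤ n)
    (q q' : Fin n → Fin (M + 2) → ℂ) (hq : GenPosP q) (hq' : GenPosP q')
    (hmem : InRedSpace hn q) (hmem' : InRedSpace hn q')
    (heq : ∀ (s : Fin (M + 1)) (t : Fin n), M + 3 ≤ t.val →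
      ecrP q (fun r : Fin M => Fin.castLE (by omega) (s.succAbove r))
          (Fin.castLE (by omega) s) ⟨M + 1, by omega⟩ ⟨M + 2, by omega⟩ t
        = ecrP q' (fun r : Fin M => Fin.castLE (by omega) (s.succAbove r))
          (Fin.castLE (by omega) s) ⟨M + 1, by omega⟩ ⟨M + 2, by omega⟩ t) :
    ∀ a : Fin n, ∃ c : ℂˣ, q a = (c : ℂ) • q' a := by
  intro a
  by_cases ha2 : (a : ℕ) < M + 2
  · refine ⟨1, ?_⟩
    rw [Units.val_one, one_smul]
    have hcast : a = Fin.castLE (show M + 2 ≤ n by omega) (⟨a, ha2⟩ : Fin (M + 2)) := by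
      ext; simp
    rw [hcast, hmem.1, hmem'.1]
  by_cases ha3 : (a : ℕ) = M + 2
  · refine ⟨1, ?_⟩
    rw [Units.val_one, one_smul]
    have hcast : a = ⟨M + 2, by omega⟩ := by ext; exact ha3
    rw [hcast, hmem.2, hmem'.2]
  -- main case
  have ht : M + 3 ≤ (a : ℕ) := by omega
  have hq1 : ∀ s : Fin (M + 1),
      q (Fin.castLE (show M + 1 ≤ n by omega) s) = Pi.single s.castSucc 1 := by
    intro s
    rw [show Fin.castLE (show M + 1 ≤ n by omega) s
        = Fin.castLE (show M + 2 ≤ n by omega) s.castSucc from by ext; simp, hmem.1]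
  have hq1' : ∀ s : Fin (M + 1),
      q' (Fin.castLE (show M + 1 ≤ n by omega) s) = Pi.single s.castSucc 1 := by
    intro s
    rw [show Fin.castLE (show M + 1 ≤ n by omega) s
        = Fin.castLE (show M + 2 ≤ n by omega) s.castSucc from by ext; simp, hmem'.1]
  have hq2 : q (⟨M + 1, by omega⟩ : Fin n) = Pi.single (Fin.last (M + 1)) 1 := by
    rw [show (⟨M + 1, by omega⟩ : Fin n)
        = Fin.castLE (show M + 2 ≤ n by omega) (Fin.last (M + 1)) from by ext; simp, hmem.1]
  have hq2' : q' (⟨M + 1, by omega⟩ : Fin n) = Pi.single (Fin.last (M + 1)) 1 := by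
    rw [show (⟨M + 1, by omega⟩ : Fin n)
        = Fin.castLE (show M + 2 ≤ n by omega) (Fin.last (M + 1)) from by ext; simp, hmem'.1]
  have hq3 : q (⟨M + 2, by omega⟩ : Fin n) = fun _ => (1 : ℂ) := hmem.2
  have hq3' : q' (⟨M + 2, by omega⟩ : Fin n) = fun _ => (1 : ℂ) := hmem'.2
  -- injectivity facts
  have hi0 : ∀ s : Fin (M + 1),
      Function.Injective (fun r : Fin M => Fin.castLE (show M + 1 ≤ n by omega) (s.succAbove r)) :=
    fun s => (Fin.castLE_injective _).comp Fin.succAbove_right_injective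
  have hi0s : ∀ (s : Fin (M + 1)) (r : Fin M),
      Fin.castLE (show M + 1 ≤ n by omega) (s.succAbove r)
        ≠ Fin.castLE (show M + 1 ≤ n by omega) s :=
    fun s r h => Fin.succAbove_ne s r (Fin.castLE_injective _ h)
  have hi0v : ∀ (s : Fin (M + 1)) (r : Fin M),
      ((Fin.castLE (show M + 1 ≤ n by omega) (s.succAbove r) : Fin n) : ℕ) ≤ M := by
    intro s r
    have := (s.succAbove r).isLt
    simp only [Fin.coe_castLE]
    omega
  -- eps is nonzero
  have heps : ∀ s : Fin (M + 1), eps M s ≠ 0 := by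
    intro s
    have h1 := hq (Fin.snoc (Fin.snoc
        (fun r : Fin M => Fin.castLE (show M + 1 ≤ n by omega) (s.succAbove r))
        (Fin.castLE (show M + 1 ≤ n by omega) s)) (⟨M + 1, by omega⟩ : Fin n))
      (snoc_snoc_inj (hi0 s) (hi0s s)
        (fun r => by
          have := hi0v s r
          simp only [ne_eq, Fin.ext_iff, Fin.coe_castLE]
          omega)
        (by
          simp only [ne_eq, Fin.ext_iff, Fin.coe_castLE]
          have := s.isLt
          omega))
    rw [dP_eval hn q hmem s, hq1 s, hq2, Pi.single_eq_same, Pi.single_eq_same,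
      Pi.single_eq_of_ne ((sc_ne_top s).symm), Pi.single_eq_of_ne (sc_ne_top s)] at h1
    intro h0
    apply h1
    rw [h0]
    ring
  -- coordinates nonzero
  have hzs : ∀ s : Fin (M + 1), q a s.castSucc ≠ 0 := by
    intro s
    have h1 := hq (Fin.snoc (Fin.snoc
        (fun r : Fin M => Fin.castLE (show M + 1 ≤ n by omega) (s.succAbove r))
        (⟨M + 1, by omega⟩ : Fin n)) a)
      (snoc_snoc_inj (hi0 s)
        (fun r => by
          have := hi0v s r
          simp only [ne_eq, Fin.ext_iff, Fin.coe_castLE]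
          omega)
        (fun r => by
          have := hi0v s r
          simp only [ne_eq, Fin.ext_iff, Fin.coe_castLE]
          omega)
        (by simp only [ne_eq, Fin.ext_iff]; omega))
    rw [dP_eval hn q hmem s, hq2, Pi.single_eq_same,
      Pi.single_eq_of_ne (sc_ne_top s)] at h1
    intro h0
    apply h1
    rw [h0]
    ring
  have hzs' : ∀ s : Fin (M + 1), q' a s.castSucc ≠ 0 := by
    intro s
    have h1 := hq' (Fin.snoc (Fin.snoc
        (fun r : Fin M => Fin.castLE (show M + 1 ≤ n by omega) (s.succAbove r))
        (⟨M + 1, by omega⟩ : Fin n)) a)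
      (snoc_snoc_inj (hi0 s)
        (fun r => by
          have := hi0v s r
          simp only [ne_eq, Fin.ext_iff, Fin.coe_castLE]
          omega)
        (fun r => by
          have := hi0v s r
          simp only [ne_eq, Fin.ext_iff, Fin.coe_castLE]
          omega)
        (by simp only [ne_eq, Fin.ext_iff]; omega))
    rw [dP_eval hn q' hmem' s, hq2', Pi.single_eq_same,
      Pi.single_eq_of_ne (sc_ne_top s)] at h1
    intro h0
    apply h1
    rw [h0]
    ring
  have hztop : q a (Fin.last (M + 1)) ≠ 0 := by
    rw [← dP_last hn q hmem a]
    apply hq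
    apply _root_.snoc_inj
    · exact fun i j hij => Fin.castSucc_injective _ (Fin.castLE_injective _ hij)
    · intro r
      have := r.isLt
      simp only [ne_eq, Fin.ext_iff, Fin.coe_castLE, Fin.coe_castSucc]
      omega
  have hztop' : q' a (Fin.last (M + 1)) ≠ 0 := by
    rw [← dP_last hn q' hmem' a]
    apply hq'
    apply _root_.snoc_inj
    · exact fun i j hij => Fin.castSucc_injective _ (Fin.castLE_injective _ hij)
    · intro r
      have := r.isLt
      simp only [ne_eq, Fin.ext_iff, Fin.coe_castLE, Fin.coe_castSucc]
      omega
  -- the key relation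
  have hrel : ∀ s : Fin (M + 1),
      q a (Fin.last (M + 1)) * q' a s.castSucc
        = q' a (Fin.last (M + 1)) * q a s.castSucc := by
    intro s
    have hthis := heq s a ht
    simp only [ecrP] at hthis
    rw [dP_eval hn q hmem s, dP_eval hn q hmem s, dP_eval hn q hmem s, dP_eval hn q hmem s,
      dP_eval hn q' hmem' s, dP_eval hn q' hmem' s, dP_eval hn q' hmem' s,
      dP_eval hn q' hmem' s, hq1 s, hq1' s, hq2, hq2', hq3, hq3'] at hthis
    simp only [Pi.single_eq_same, Pi.single_eq_of_ne (sc_ne_top s),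
      Pi.single_eq_of_ne ((sc_ne_top s).symm)] at hthis
    rw [div_eq_div_iff] at hthis
    · apply mul_right_cancel₀ (pow_ne_zero 4 (heps s))
      linear_combination -hthis
    · intro h0
      rcases mul_eq_zero.mp h0 with h0 | h0
      · exact heps s (by linear_combination h0)
      · rcases mul_eq_zero.mp h0 with h0 | h0
        · exact hzs s (by linear_combination -h0)
        · exact heps s h0
    · intro h0
      rcases mul_eq_zero.mp h0 with h0 | h0
      · exact heps s (by linear_combination h0)
      · rcases mul_eq_zero.mp h0 with h0 | h0
        · exact hzs' s (by linear_combination -h0)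
        · exact heps s h0
  refine ⟨Units.mk0 (q a (Fin.last (M + 1)) / q' a (Fin.last (M + 1)))
    (div_ne_zero hztop hztop'), ?_⟩
  funext x
  rw [Pi.smul_apply, smul_eq_mul, Units.val_mk0]
  induction x using Fin.lastCases with
  | last => rw [div_mul_cancel₀ _ hztop']
  | cast s =>
    rw [div_mul_eq_mul_div, eq_div_iff hztop']
    linear_combination -(hrel s)
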